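/- Let a_{ij}, h_{i s̄}, W^s_{ik l̄} be complex numbers (indices in {1,2}) satisfying the identity ε_{ki} conj(a_{jl}) − conj(ε_{lj}) a_{ik} = conj(h_{j s̄}) W^s_{ik l̄} − h_{i s̄} conj(W^s_{jl k̄}) for all i,j,k,l, where ε is the antisymmetric symbol with ε_{12} = 1 and summation over s is implied. Assume W is symmetric in its two lower unbarred indices (W^s_{ik l̄} = W^s_{ki l̄}), trace-free (W^l_{lk j̄} = 0), and h is Hermitian (h_{i j̄} = conj(h_{j ī})). Then the number h := −(1/2) conj(ε^{ij} a_{ij}) (where ε^{12} = 1 is the inverse antisymmetric symbol, summation over i,j) is real. -/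
import Mathlib


/-- The antisymmetric symbol on two indices, with ε₁₂ = 1 (indices shifted to {0,1}). -/
def eps : Fin 2 → Fin 2 → ℂ := fun i j =>
  if i = 0 ∧ j = 1 then 1 else if i = 1 ∧ j = 0 then -1 else 0

/-- In the first prolongation of the Kähler metrisability equations, the trace part
`h = −(1/2) conj(ε^{ij} a_{ij})` of the coefficients `a` is real. -/
theorem trace_part_real (a h : Fin 2 → Fin 2 → ℂ) (W : Fin 2 → Fin 2 → Fin 2 → Fin 2 → ℂ)
    (hWsym : ∀ s i k l, W s i k l = W s k i l)
    (hWtrace : ∀ k j, (∑ l, W l l k j) = 0)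
    (hherm : ∀ i j, h i j = (starRingEnd ℂ) (h j i))
    (hident : ∀ i j k l,
      eps k i * (starRingEnd ℂ) (a j l) - (starRingEnd ℂ) (eps l j) * a i k
        = (∑ s, (starRingEnd ℂ) (h j s) * W s i k l)
          - ∑ s, h i s * (starRingEnd ℂ) (W s j l k)) :
    (starRingEnd ℂ) (-(1/2 : ℂ) * (starRingEnd ℂ) (∑ i, ∑ j, eps i j * a i j))
      = -(1/2 : ℂ) * (starRingEnd ℂ) (∑ i, ∑ j, eps i j * a i j) := by

  have E1 := hident 0 0 1 1
  have E2 := hident 0 1 1 0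
  have E3 := hident 1 0 0 1
  have E4 := hident 1 1 0 0
  have A0 := hWsym 0 0 1 1
  have A1 := hWsym 1 0 1 1
  have B0 := hWsym 0 0 1 0
  have B1 := hWsym 1 0 1 0
  have A0' := congrArg (starRingEnd ℂ) A0
  have A1' := congrArg (starRingEnd ℂ) A1
  have B0' := congrArg (starRingEnd ℂ) B0
  have B1' := congrArg (starRingEnd ℂ) B1
  simp only [Fin.sum_univ_two, eps, map_sum, map_mul, map_neg, map_one, map_zero, map_ofNat, map_div₀,
    Complex.conj_conj] at *
  norm_num at *
  linear_combination ((1:ℂ)/2) * (E1 - E2 - E3 + E4)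
    + ((1:ℂ)/2) * ((starRingEnd ℂ) (h 0 0) * A0 + (starRingEnd ℂ) (h 0 1) * A1
      - (starRingEnd ℂ) (h 1 0) * B0 - (starRingEnd ℂ) (h 1 1) * B1)
    + (-(1:ℂ)/2) * (h 0 0 * A0' + h 0 1 * A1' - h 1 0 * B0' - h 1 1 * B1')
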